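/- Let n ≥ 3 be an odd integer, let m ≥ 2 be an integer, and let x, y be integers with y ≥ 1 satisfying x^n − m·y^n = 1 or x^n − m·y^n = −1. If c₁·y^{n−2} > 2, where c₁ = m^{(n−1)/n}·∏_{j=1}^{n−1} |sin(2πj/n)|, then |m^{1/n} − x/y| < 1/(2y²). -/

import Mathlib

set_option maxHeartbeats 1000000 in
open Complex in
/-- For an odd integer `n ≥ 3`, an integer `m ≥ 2`, and integers
`x, y` with `y ≥ 1` satisfying `x^n − m·y^n = ±1`: if `c₁·y^{n−2} > 2`, where
`c₁ = m^{(n−1)/n}·∏_{j=1}^{n−1}|sin(2πj/n)|`, then `|m^{1/n} − x/y| < 1/(2y²)`. -/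
theorem stmt_3 (n : ℕ) (hn : 3 ≤ n) (hodd : Odd n) (m : ℤ) (hm : 2 ≤ m)
    (x y : ℤ) (hy : 1 ≤ y)
    (h : x ^ n - m * y ^ n = 1 ∨ x ^ n - m * y ^ n = -1)
    (hc : ((m : ℝ) ^ (((n : ℝ) - 1) / n) *
        ∏ j ∈ Finset.Icc 1 (n - 1), |Real.sin (2 * Real.pi * (j : ℝ) / n)|) *
        (y : ℝ) ^ (n - 2) > 2) :
    |(m : ℝ) ^ ((1 : ℝ) / n) - (x : ℝ) / (y : ℝ)| < 1 / (2 * (y : ℝ) ^ 2) := by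
  have hnne : n ≠ 0 := by omega
  have hn0 : (0:ℝ) < (n:ℝ) := by positivity
  have hm0 : (0:ℝ) < (m:ℝ) := by exact_mod_cast lt_of_lt_of_le zero_lt_two hm
  have hy0 : (0:ℝ) < (y:ℝ) := by exact_mod_cast lt_of_lt_of_le zero_lt_one hy
  set α : ℝ := (m:ℝ) ^ ((1:ℝ)/n) with hα
  have hαpos : 0 < α := Real.rpow_pos_of_pos hm0 _
  have hαn : α ^ n = (m:ℝ) := by
    rw [hα, ← Real.rpow_natCast ((m:ℝ) ^ ((1:ℝ)/n)) n, ← Real.rpow_mul hm0.le,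
      one_div_mul_cancel hn0.ne', Real.rpow_one]
  have hαn1 : α ^ (n-1) = (m:ℝ) ^ (((n:ℝ) - 1) / n) := by
    rw [hα, ← Real.rpow_natCast ((m:ℝ) ^ ((1:ℝ)/n)) (n-1), ← Real.rpow_mul hm0.le]
    congr 1
    rw [Nat.cast_sub (by omega), Nat.cast_one]
    field_simp
  set ζ : ℂ := Complex.exp (2 * Real.pi * Complex.I / n) with hζdef
  have hζ : IsPrimitiveRoot ζ n := Complex.isPrimitiveRoot_exp n hnne
  -- factorization
  have himg : Polynomial.nthRootsFinset n (1 : ℂ) = (Finset.range n).image (ζ ^ ·) := by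
    symm
    apply Finset.eq_of_subset_of_card_le
    · intro μ hμ
      obtain ⟨j, hj, rfl⟩ := Finset.mem_image.1 hμ
      exact (Polynomial.mem_nthRootsFinset (by omega) 1).2
        (by rw [← pow_mul, mul_comm, pow_mul, hζ.pow_eq_one, one_pow])
    · rw [hζ.card_nthRootsFinset, Finset.card_image_of_injOn, Finset.card_range]
      intro a ha b hb hab
      exact hζ.pow_inj (Finset.mem_range.1 ha) (Finset.mem_range.1 hb) hab
  have hfact : ((x:ℂ) ^ n - (m:ℂ) * (y:ℂ) ^ n)
      = ∏ j ∈ Finset.range n, ((x:ℂ) - ζ ^ j * ((α * y : ℝ) : ℂ)) := by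
    have h1 := hζ.pow_sub_pow_eq_prod_sub_mul (x:ℂ) (((α * y : ℝ)) : ℂ) (by omega)
    have h2 : (((α*y : ℝ)):ℂ)^n = (m:ℂ) * (y:ℂ)^n := by
      rw [← Complex.ofReal_pow, mul_pow, hαn]; push_cast; ring
    rw [h2] at h1
    rw [h1, himg, Finset.prod_image]
    intro a ha b hb hab
    exact hζ.pow_inj (Finset.mem_range.1 ha) (Finset.mem_range.1 hb) hab
  -- absolute value is 1
  have habs1 : ∏ j ∈ Finset.range n, ‖(x:ℂ) - ζ ^ j * ((α * y : ℝ) : ℂ)‖ = 1 := by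
    rw [← norm_prod, ← hfact]
    have hC : ((x:ℂ) ^ n - (m:ℂ)*(y:ℂ)^n) = ((x^n - m*y^n : ℤ) : ℂ) := by push_cast; ring
    rcases h with h | h <;> rw [hC, h] <;> simp
  -- split off j = 0
  have hrange : Finset.range n = insert 0 (Finset.Icc 1 (n-1)) := by
    ext a; simp only [Finset.mem_range, Finset.mem_insert, Finset.mem_Icc]; omega
  have h0notin : 0 ∉ Finset.Icc 1 (n-1) := by simp
  rw [hrange, Finset.prod_insert h0notin] at habs1
  have hterm0 : ‖(x:ℂ) - ζ ^ 0 * ((α * y : ℝ) : ℂ)‖ = |(x:ℝ) - α * y| := by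
    rw [pow_zero, one_mul, show (x:ℂ) - ((α*y:ℝ):ℂ) = (((x:ℝ) - α*y : ℝ) : ℂ) by push_cast; ring,
      Complex.norm_real, Real.norm_eq_abs]
  rw [hterm0] at habs1
  -- sines are nonzero
  have hsinne : ∀ j ∈ Finset.Icc 1 (n-1), Real.sin (2 * Real.pi * (j:ℝ) / n) ≠ 0 := by
    intro j hj hsin
    rw [Finset.mem_Icc] at hj
    rw [Real.sin_eq_zero_iff] at hsin
    obtain ⟨k, hk⟩ := hsin
    have hk2 : (k:ℝ) * (n:ℝ) = 2 * (j:ℝ) := by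
      have hπ : (0:ℝ) < Real.pi := Real.pi_pos
      field_simp at hk
      nlinarith [hk]
    have hk3 : (k:ℤ) * (n:ℤ) = 2 * (j:ℤ) := by exact_mod_cast hk2
    have hdvd : (n:ℤ) ∣ 2 * (j:ℤ) := ⟨k, by linarith⟩
    have hcop : IsCoprime (n:ℤ) (2:ℤ) := by
      rw [show ((2:ℤ)) = ((2:ℕ):ℤ) by norm_num, Nat.isCoprime_iff_coprime]
      exact Nat.coprime_two_right.mpr hodd
    have hdvdj : (n:ℤ) ∣ (j:ℤ) := hcop.dvd_of_dvd_mul_left hdvd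
    have : n ∣ j := by exact_mod_cast hdvdj
    have := Nat.le_of_dvd (by omega) this
    omega
  -- lower bound each term
  have hbound : ∀ j ∈ Finset.Icc 1 (n-1),
      α * (y:ℝ) * |Real.sin (2 * Real.pi * (j:ℝ) / n)|
        ≤ ‖(x:ℂ) - ζ ^ j * ((α * y : ℝ) : ℂ)‖ := by
    intro j hj
    have hζj : (ζ ^ j).im = Real.sin (2 * Real.pi * (j:ℝ) / n) := by
      rw [hζdef, ← Complex.exp_nat_mul,
        show (j:ℂ) * (2 * Real.pi * Complex.I / n)
          = ((2 * Real.pi * (j:ℝ) / n : ℝ) : ℂ) * Complex.I by push_cast; ring,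
        Complex.exp_ofReal_mul_I_im]
    have him : ((x:ℂ) - ζ ^ j * ((α * y : ℝ) : ℂ)).im
        = -(Real.sin (2 * Real.pi * (j:ℝ) / n) * (α * y)) := by
      simp [Complex.sub_im, Complex.mul_im, hζj]
    calc α * (y:ℝ) * |Real.sin (2 * Real.pi * (j:ℝ) / n)|
        = |((x:ℂ) - ζ ^ j * ((α * y : ℝ) : ℂ)).im| := by
          rw [him, abs_neg, abs_mul, abs_of_pos (mul_pos hαpos hy0)]; ring
      _ ≤ _ := Complex.abs_im_le_norm _
  set c₂ : ℝ := ∏ j ∈ Finset.Icc 1 (n-1), |Real.sin (2 * Real.pi * (j:ℝ) / n)| with hc₂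
  have hc₂pos : 0 < c₂ := by
    apply Finset.prod_pos
    intro j hj
    exact abs_pos.2 (hsinne j hj)
  have hcard : (Finset.Icc 1 (n-1)).card = n - 1 := by
    rw [Nat.card_Icc]; omega
  have hprodlb : (α * y) ^ (n-1) * c₂
      ≤ ∏ j ∈ Finset.Icc 1 (n-1), ‖(x:ℂ) - ζ ^ j * ((α * y : ℝ) : ℂ)‖ := by
    have : (α * y) ^ (n-1) * c₂
        = ∏ j ∈ Finset.Icc 1 (n-1), (α * (y:ℝ) * |Real.sin (2 * Real.pi * (j:ℝ) / n)|) := by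
      rw [Finset.prod_mul_distrib, Finset.prod_const, hcard, hc₂]
    rw [this]
    apply Finset.prod_le_prod
    · intro j hj; positivity
    · exact hbound
  -- main inequality: |x - αy| * (c₁ y^{n-1}) ≤ 1
  set c₁ : ℝ := (m : ℝ) ^ (((n : ℝ) - 1) / n) * c₂ with hc₁
  have hc₁eq : (α * y) ^ (n-1) * c₂ = c₁ * (y:ℝ) ^ (n-1) := by
    rw [hc₁, mul_pow, hαn1]; ring
  have habs0 : 0 ≤ |(x:ℝ) - α * y| := abs_nonneg _
  have hmain : |(x:ℝ) - α * y| * (c₁ * (y:ℝ) ^ (n-1)) ≤ 1 := by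
    rw [← hc₁eq]
    calc |(x:ℝ) - α * y| * ((α * y) ^ (n-1) * c₂)
        ≤ |(x:ℝ) - α * y| * ∏ j ∈ Finset.Icc 1 (n-1),
            ‖(x:ℂ) - ζ ^ j * ((α * y : ℝ) : ℂ)‖ :=
          mul_le_mul_of_nonneg_left hprodlb habs0
      _ = 1 := habs1
  -- positivity of c₁ y^{n-1}
  have hyn2 : (0:ℝ) < (y:ℝ) ^ (n-2) := by positivity
  have hc₁pos : 0 < c₁ := by
    have := hc
    nlinarith [hyn2]
  have hDpos : 0 < c₁ * (y:ℝ) ^ (n-1) := by positivity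
  have h1 : |(x:ℝ) - α * y| ≤ 1 / (c₁ * (y:ℝ) ^ (n-1)) := by
    rw [le_div_iff₀ hDpos]; exact hmain
  have hpow : (y:ℝ) ^ (n-1) = (y:ℝ) ^ (n-2) * (y:ℝ) := by
    rw [show n - 1 = (n-2) + 1 by omega, pow_succ]
  have h2 : 1 / (c₁ * (y:ℝ) ^ (n-1)) < 1 / (2 * (y:ℝ)) := by
    apply one_div_lt_one_div_of_lt (by positivity)
    rw [hpow, ← mul_assoc]
    have : 2 < c₁ * (y:ℝ) ^ (n-2) := by rw [hc₁] at hc ⊢; exact hc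
    nlinarith [hy0]
  have h3 : |(x:ℝ) - α * y| < 1 / (2 * (y:ℝ)) := lt_of_le_of_lt h1 h2
  have h4 : |(x:ℝ) - α * y| * (2 * (y:ℝ)) < 1 := by
    rw [← lt_div_iff₀ (by positivity)]; exact h3
  have heq : α - (x:ℝ) / (y:ℝ) = -(((x:ℝ) - α * y) / y) := by
    field_simp; ring
  rw [heq, abs_neg, abs_div, abs_of_pos hy0, div_lt_div_iff₀ hy0 (by positivity)]
  nlinarith [h4, hy0, habs0]
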